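/- Let ρ be a density operator (a positive, trace-class operator of trace one) on a separable complex Hilbert space H, and let {e n}_{n∈ℕ} be an orthonormal basis of H. Then the diagonal sequence {⟨e n, ρ e n⟩}_{n∈ℕ}, rearranged in decreasing order, is majorized by the eigenvalue sequence {λ n}_{n∈ℕ} of ρ sorted in decreasing order with multiplicity: ∑_{n=1}^{k} p n ≤ ∑_{n=1}^{k} λ n for all k ∈ ℕ, and ∑_{n∈ℕ} p n = ∑_{n∈ℕ} λ n = 1, where p is the decreasing rearrangement of the diagonal. -/

import Mathlib

open scoped InnerProductSpace

private lemma re_mul_conj' (z : ℂ) : (z * (starRingEnd ℂ) z).re = ‖z‖ ^ 2 := by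
  rw [Complex.mul_conj, Complex.ofReal_re, Complex.normSq_eq_norm_sq]

set_option maxHeartbeats 1000000 in
/-- (Consequence of Arveson–Kadison, Theorem 4.1.)  Let `ρ` be a density operator (positive,
trace-class, trace one) on a separable complex Hilbert space, with eigenvalue sequence `lam`
sorted in decreasing order with multiplicity (encoded by the spectral decomposition
`ρ x = ∑' n, lam n • ⟪v n, x⟫ • v n` with `v` orthonormal), and let `e` be an orthonormal
basis.  Then the decreasing rearrangement `p` of the diagonal `⟪e n, ρ (e n)⟫` is majorized
by `lam`: all partial sums of `p` are bounded by those of `lam`, and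
`∑' n, p n = ∑' n, lam n = 1`. -/
theorem diagonal_majorized_by_eigenvalues
    {H : Type*} [NormedAddCommGroup H] [InnerProductSpace ℂ H] [CompleteSpace H]
    (ρ : H →L[ℂ] H) (hpos : ρ.IsPositive)
    (lam : ℕ → ℝ) (v : ℕ → H)
    (hlam0 : ∀ n, 0 ≤ lam n) (hlam_anti : Antitone lam)
    (hlam_sum : Summable lam) (hlam1 : ∑' n, lam n = 1)
    (hv : Orthonormal ℂ v)
    (hspec : ∀ x, ρ x = ∑' n, lam n • (⟪v n, x⟫_ℂ • v n))
    (e : HilbertBasis ℕ ℂ H)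
    (p : ℕ → ℝ) (σ : ℕ ≃ ℕ)
    (hpdiag : ∀ n, p n = (⟪e (σ n), ρ (e (σ n))⟫_ℂ).re)
    (hpa : Antitone p) :
    (∀ k, ∑ n ∈ Finset.range k, p n ≤ ∑ n ∈ Finset.range k, lam n) ∧
      Summable p ∧ ∑' n, p n = 1 := by
  classical
  -- the doubly (sub)stochastic matrix
  set a : ℕ → ℕ → ℝ := fun n m => ‖⟪v m, e (σ n)⟫_ℂ‖ ^ 2 with ha
  have ha0 : ∀ n m, 0 ≤ a n m := fun n m => by positivity
  have hnorm_e : ∀ n, ‖(e n : H)‖ = 1 := fun n => e.orthonormal.1 n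
  -- rows: p n = ∑' m, lam m * a n m, as a HasSum
  have hP : ∀ n, HasSum (fun m => lam m * a n m) (p n) := by
    intro n
    set x := (e (σ n) : H) with hx
    have hsumv : Summable (fun m => lam m • (⟪v m, x⟫_ℂ • v m)) := by
      apply Summable.of_norm_bounded (g := fun m => lam m * ‖x‖) (hlam_sum.mul_right _)
      intro m
      rw [norm_smul, norm_smul, hv.1 m, mul_one, Real.norm_of_nonneg (hlam0 m)]
      refine mul_le_mul_of_nonneg_left ?_ (hlam0 m)
      calc ‖⟪v m, x⟫_ℂ‖ ≤ ‖v m‖ * ‖x‖ := norm_inner_le_norm _ _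
        _ = ‖x‖ := by rw [hv.1 m, one_mul]
    have h1 : HasSum (fun m => lam m • (⟪v m, x⟫_ℂ • v m)) (ρ x) := by
      rw [hspec x]; exact hsumv.hasSum
    have h2 := h1.mapL (innerSL ℂ x)
    have h3 := h2.mapL Complex.reCLM
    have hterm : ∀ m, lam m * a n m
        = Complex.reCLM ((innerSL ℂ x) (lam m • (⟪v m, x⟫_ℂ • v m))) := by
      intro m
      have h5 : ⟪x, lam m • (⟪v m, x⟫_ℂ • v m)⟫_ℂ
          = lam m • (⟪v m, x⟫_ℂ * (starRingEnd ℂ) ⟪v m, x⟫_ℂ) := by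
        rw [RCLike.real_smul_eq_coe_smul (K := ℂ), inner_smul_real_right, inner_smul_right,
          ← inner_conj_symm x (v m)]
      simp only [Complex.reCLM_apply, innerSL_apply_apply, h5, Complex.smul_re, smul_eq_mul,
        re_mul_conj']
      rfl
    have h4 : HasSum (fun m => lam m * a n m) (Complex.reCLM ((innerSL ℂ x) (ρ x))) :=
      h3.congr_fun hterm
    simp only [Complex.reCLM_apply, innerSL_apply_apply] at h4
    rwa [← hpdiag n] at h4
  -- columns: ∑' n, a n m = 1
  have hcol : ∀ m, HasSum (fun n => a n m) 1 := by
    intro m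
    have hvv : ⟪v m, v m⟫_ℂ = 1 := (orthonormal_iff_ite.mp hv m m).trans (if_pos rfl)
    have h1 : HasSum (fun i => ⟪v m, e i⟫_ℂ * ⟪e i, v m⟫_ℂ) (1 : ℂ) := by
      have := e.hasSum_inner_mul_inner (v m) (v m)
      rwa [hvv] at this
    have h2 := h1.mapL Complex.reCLM
    have hterm : ∀ i, ((fun n => a n m) ∘ σ.symm) i
        = Complex.reCLM (⟪v m, e i⟫_ℂ * ⟪e i, v m⟫_ℂ) := by
      intro i
      rw [← inner_conj_symm (e i) (v m), Complex.reCLM_apply, re_mul_conj']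
      simp [ha, Function.comp, Equiv.apply_symm_apply]
    have h3 : HasSum ((fun n => a n m) ∘ σ.symm) (1 : ℝ) := by
      simpa using h2.congr_fun hterm
    exact (σ.symm.hasSum_iff).1 h3
  -- rows are Bessel-bounded
  have hrow_sum : ∀ n, Summable (fun m => a n m) := fun n => hv.inner_products_summable _
  have hrow_le : ∀ n, ∑' m, a n m ≤ 1 := by
    intro n
    have := hv.tsum_inner_products_le (e (σ n))
    rwa [hnorm_e (σ n), one_pow] at this
  -- double summability (summed first over n, then over m)
  have hF : Summable (fun q : ℕ × ℕ => lam q.1 * a q.2 q.1) := by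
    rw [summable_prod_of_nonneg (fun q => mul_nonneg (hlam0 q.1) (ha0 q.2 q.1))]
    constructor
    · exact fun m => ((hcol m).summable).mul_left (lam m)
    · apply hlam_sum.congr
      intro m
      rw [((hcol m).mul_left (lam m)).tsum_eq, mul_one]
  -- summability of p
  have hFs : Summable (fun q : ℕ × ℕ => lam q.2 * a q.1 q.2) :=
    (Equiv.prodComm ℕ ℕ).summable_iff.2 hF
  have hps : Summable p := by
    have h := (summable_prod_of_nonneg
      (f := fun q : ℕ × ℕ => lam q.2 * a q.1 q.2)
      (fun q => mul_nonneg (hlam0 q.2) (ha0 q.1 q.2))).1 hFs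
    apply h.2.congr
    intro n
    exact (hP n).tsum_eq
  -- total sum
  have htot : ∑' n, p n = 1 := by
    have h1 : ∑' n, p n = ∑' (n) (m), lam m * a n m := by
      exact tsum_congr fun n => (hP n).tsum_eq.symm
    have h2 : ∑' (q : ℕ × ℕ), lam q.2 * a q.1 q.2 = ∑' (n) (m), lam m * a n m :=
      Summable.tsum_prod' hFs (fun n => (hP n).summable)
    have h3 : ∑' (q : ℕ × ℕ), lam q.1 * a q.2 q.1 = ∑' (m) (n), lam m * a n m :=
      Summable.tsum_prod' hF (fun m => ((hcol m).summable).mul_left (lam m))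
    have h4 : ∑' (q : ℕ × ℕ), lam q.2 * a q.1 q.2 = ∑' (q : ℕ × ℕ), lam q.1 * a q.2 q.1 :=
      ((Equiv.prodComm ℕ ℕ).tsum_eq _).symm
    have h5 : ∑' (m) (n : ℕ), lam m * a n m = ∑' m, lam m := by
      apply tsum_congr
      intro m
      rw [((hcol m).mul_left (lam m)).tsum_eq, mul_one]
    rw [h1, ← h2, h4, h3, h5, hlam1]
  refine ⟨?_, hps, htot⟩
  -- partial sums
  intro k
  set c : ℕ → ℝ := fun m => ∑ n ∈ Finset.range k, a n m with hc
  have hc0 : ∀ m, 0 ≤ c m := fun m => Finset.sum_nonneg fun n _ => ha0 n m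
  have hc1 : ∀ m, c m ≤ 1 := fun m =>
    (sum_le_hasSum (Finset.range k) (fun n _ => ha0 n m) (hcol m))
  have hc_sum : Summable c := summable_sum fun n _ => hrow_sum n
  have hc_tsum : ∑' m, c m ≤ (k : ℝ) := by
    have : ∑' m, c m = ∑ n ∈ Finset.range k, ∑' m, a n m :=
      Summable.tsum_finsetSum fun n _ => hrow_sum n
    rw [this]
    calc ∑ n ∈ Finset.range k, ∑' m, a n m ≤ ∑ n ∈ Finset.range k, (1 : ℝ) :=
          Finset.sum_le_sum fun n _ => hrow_le n
      _ = k := by simp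
  -- LHS = ∑' m, lam m * c m
  have hlhs : ∑ n ∈ Finset.range k, p n = ∑' m, lam m * c m := by
    have h1 : ∑ n ∈ Finset.range k, p n = ∑ n ∈ Finset.range k, ∑' m, lam m * a n m :=
      Finset.sum_congr rfl fun n _ => (hP n).tsum_eq.symm
    have h2 : ∑' m, ∑ n ∈ Finset.range k, lam m * a n m
        = ∑ n ∈ Finset.range k, ∑' m, lam m * a n m :=
      Summable.tsum_finsetSum fun n _ => (hP n).summable
    rw [h1, ← h2]
    apply tsum_congr
    intro m
    rw [← Finset.mul_sum]
  have hs1 : Summable (fun m => lam m * c m) :=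
    Summable.of_nonneg_of_le (fun m => mul_nonneg (hlam0 m) (hc0 m))
      (fun m => by
        calc lam m * c m ≤ lam m * 1 := mul_le_mul_of_nonneg_left (hc1 m) (hlam0 m)
          _ = lam m := mul_one _) hlam_sum
  have hs2 : Summable (fun m => lam k * c m) := hc_sum.mul_left _
  have hs3 : Summable (fun m => (lam m - lam k) * c m) := by
    apply (hs1.sub hs2).congr
    intro m; ring
  -- key chain of inequalities
  have key1 : ∑' m, (lam m - lam k) * c m ≤ ∑ m ∈ Finset.range k, (lam m - lam k) * c m := by
    have hneg := Summable.sum_le_tsum (f := fun m => -((lam m - lam k) * c m)) (Finset.range k)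
      (fun m hm => by
        have hmk : k ≤ m := by simpa using hm
        have h1 : lam m ≤ lam k := hlam_anti hmk
        have h2 := hc0 m
        show 0 ≤ -((lam m - lam k) * c m)
        nlinarith)
      hs3.neg
    rw [tsum_neg] at hneg
    simp only [Finset.sum_neg_distrib] at hneg
    linarith
  have key2 : ∑ m ∈ Finset.range k, (lam m - lam k) * c m
      ≤ ∑ m ∈ Finset.range k, (lam m - lam k) := by
    apply Finset.sum_le_sum
    intro m hm
    have hmk : m ≤ k := le_of_lt (by simpa using hm)
    have h1 : 0 ≤ lam m - lam k := sub_nonneg.2 (hlam_anti hmk)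
    nlinarith [hc1 m, hc0 m]
  have key3 : lam k * ∑' m, c m ≤ lam k * k :=
    mul_le_mul_of_nonneg_left hc_tsum (hlam0 k)
  have hsplit : ∑' m, lam m * c m
      = (∑' m, (lam m - lam k) * c m) + lam k * ∑' m, c m := by
    rw [← tsum_mul_left (a := lam k), ← Summable.tsum_add hs3 (hc_sum.mul_left (lam k))]
    apply tsum_congr
    intro m; ring
  have hfin : ∑ m ∈ Finset.range k, (lam m - lam k) + lam k * k
      = ∑ m ∈ Finset.range k, lam m := by
    rw [Finset.sum_sub_distrib, Finset.sum_const, Finset.card_range]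
    push_cast; ring
  rw [hlhs, hsplit]
  linarith
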